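/- Let B be a positive bounded operator on a complex Hilbert space H, let K be a complex Hilbert space, and let J : K → H be an injective continuous linear map with J ∘ J* = B. Then the map Ψ(P) := J ∘ P ∘ J* is a bijection from the set of orthogonal projections on K (continuous linear P : K → K with P* = P and P ∘ P = P) onto the set of extreme points of the operator interval [0,B], and moreover for all orthogonal projections P, Q on K one has Ψ(P) ≤ Ψ(Q) if and only if P ≤ Q. -/

import Mathlib

open scoped ComplexOrder

set_option synthInstance.maxHeartbeats 1000000
set_option maxHeartbeats 1600000

/-- `A` is a positive operator: `⟪A x, x⟫ ≥ 0` for all `x`. -/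
def IsPosOp {H : Type*} [NormedAddCommGroup H] [InnerProductSpace ℂ H]
    (A : H →L[ℂ] H) : Prop :=
  ∀ x : H, 0 ≤ (inner ℂ (A x) x : ℂ)

/-- The Loewner order: `A ≤ B` iff `B - A` is positive. -/
def OpLe {H : Type*} [NormedAddCommGroup H] [InnerProductSpace ℂ H]
    (A B : H →L[ℂ] H) : Prop :=
  IsPosOp (B - A)

/-- The quadratic form of an operator: `A[x] = re ⟪A x, x⟫`. -/
noncomputable def QF {H : Type*} [NormedAddCommGroup H] [InnerProductSpace ℂ H]
    (A : H →L[ℂ] H) (x : H) : ℝ :=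
  (inner ℂ (A x) x : ℂ).re

/-- `A` and `B` are singular: the only positive operator below both is `0`. -/
def SingOp {H : Type*} [NormedAddCommGroup H] [InnerProductSpace ℂ H]
    (A B : H →L[ℂ] H) : Prop :=
  ∀ C : H →L[ℂ] H, IsPosOp C → OpLe C A → OpLe C B → C = 0

/-- `B` is `A`-absolutely continuous: `B` is the strong limit of a monotone increasing
sequence of positive operators, each dominated by a nonnegative multiple of `A`. -/
def AbsCont {H : Type*} [NormedAddCommGroup H] [InnerProductSpace ℂ H]
    (B A : H →L[ℂ] H) : Prop :=
  ∃ Bn : ℕ → H →L[ℂ] H,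
    (∀ n, IsPosOp (Bn n)) ∧
    (∀ m n, m ≤ n → OpLe (Bn m) (Bn n)) ∧
    (∀ n, ∃ c : ℝ, 0 ≤ c ∧ OpLe (Bn n) (c • A)) ∧
    (∀ x : H, Filter.Tendsto (fun n => Bn n x) Filter.atTop (nhds (B x)))

/-- `S = [A]B`: the quadratic form of `S` is `sup_n inf_y (B[x-y] + n·A[y])`. -/
def IsShort {H : Type*} [NormedAddCommGroup H] [InnerProductSpace ℂ H]
    (A B S : H →L[ℂ] H) : Prop :=
  ∀ x : H, QF S x = ⨆ n : ℕ, ⨅ y : H, (QF B (x - y) + (n : ℝ) * QF A y)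

namespace ExtremeAux
open ContinuousLinearMap
open scoped NNReal
variable {H : Type*} [NormedAddCommGroup H] [InnerProductSpace ℂ H] [CompleteSpace H]

local notation "⟪" x ", " y "⟫" => @inner ℂ _ _ x y

lemma isPosOp_iff_nonneg (A : H →L[ℂ] H) : IsPosOp A ↔ 0 ≤ A := by
  rw [nonneg_iff_isPositive, isPositive_iff_complex]
  constructor
  · intro h x
    obtain ⟨h1, h2⟩ := Complex.le_def.mp (h x)
    refine ⟨?_, by simpa using h1⟩
    apply Complex.ext <;> simp [← h2]
  · intro h x
    obtain ⟨h1, h2⟩ := h x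
    rw [Complex.le_def]
    refine ⟨by simpa using h2, ?_⟩
    simpa using congrArg Complex.im h1

lemma opLe_iff (A B : H →L[ℂ] H) : OpLe A B ↔ A ≤ B := by
  rw [OpLe, isPosOp_iff_nonneg, sub_nonneg]

lemma apply_eq_zero_of_re_inner_zero {A : H →L[ℂ] H} (hA : 0 ≤ A) {x : H}
    (hx : (⟪A x, x⟫).re = 0) : A x = 0 := by
  set R := CFC.sqrt A with hRdef
  have hR0 : 0 ≤ R := CFC.sqrt_nonneg _
  have hRR : R * R = A := CFC.sqrt_mul_sqrt_self A hA
  have hRsa : ContinuousLinearMap.adjoint R = R := isSelfAdjoint_iff'.mp hR0.isSelfAdjoint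
  have key : ⟪A x, x⟫ = ⟪R x, R x⟫ := by
    conv_lhs => rw [← hRR]
    rw [mul_apply_eq_comp, ← hRsa, adjoint_inner_left, hRsa]
  have h2 : ‖R x‖ ^ 2 = 0 := by
    have h3 := congrArg Complex.re key
    rw [hx] at h3
    rw [← @inner_self_eq_norm_sq ℂ]
    exact h3.symm
  have hRx : R x = 0 := by
    simpa using (pow_eq_zero_iff (n := 2) (by norm_num)).mp h2
  rw [← hRR, mul_apply_eq_comp, hRx, map_zero]


variable {K : Type*} [NormedAddCommGroup K] [InnerProductSpace ℂ K] [CompleteSpace K]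
variable {J : K →L[ℂ] H}

lemma denseRange_adjoint (hJ : Function.Injective J) :
    DenseRange (ContinuousLinearMap.adjoint J) := by
  have h1 : (LinearMap.range (ContinuousLinearMap.adjoint J : H →ₗ[ℂ] K)).topologicalClosure = ⊤ := by
    rw [Submodule.topologicalClosure_eq_top_iff, Submodule.eq_bot_iff]
    intro y hy
    have hyJ : J y = 0 := by
      have h2 := hy (ContinuousLinearMap.adjoint J (J y)) (LinearMap.mem_range_self _ _)
      rw [adjoint_inner_left] at h2
      exact inner_self_eq_zero.mp h2
    have := hJ (a₁ := y) (a₂ := 0) (by simpa using hyJ)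
    exact this
  intro z
  have : z ∈ (LinearMap.range (ContinuousLinearMap.adjoint J : H →ₗ[ℂ] K)).topologicalClosure := by
    rw [h1]; trivial
  rw [← SetLike.mem_coe, Submodule.topologicalClosure_coe, LinearMap.coe_range] at this
  exact this

lemma nonneg_of_inner_adjoint (hJ : Function.Injective J) (C : K →L[ℂ] K)
    (h : ∀ x : H, 0 ≤ ⟪C (ContinuousLinearMap.adjoint J x), ContinuousLinearMap.adjoint J x⟫) :
    0 ≤ C := by
  rw [← isPosOp_iff_nonneg]
  intro z
  have hcont : Continuous fun w : K => (⟪C w, w⟫ : ℂ) :=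
    Continuous.inner (C.continuous) continuous_id
  have hclosed : IsClosed {w : K | 0 ≤ (⟪C w, w⟫ : ℂ)} := by
    have : {w : K | 0 ≤ (⟪C w, w⟫ : ℂ)} =
        (fun w : K => (⟪C w, w⟫ : ℂ)) ⁻¹' {v : ℂ | 0 ≤ v.re ∧ 0 = v.im} := by
      ext w; simp [Complex.le_def]
    rw [this]
    apply IsClosed.preimage hcont
    exact (isClosed_le continuous_const (Complex.continuous_re)).inter
      (isClosed_eq continuous_const (Complex.continuous_im))
  have hsub : Set.range (ContinuousLinearMap.adjoint J) ⊆ {w : K | 0 ≤ (⟪C w, w⟫ : ℂ)} := by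
    rintro _ ⟨x, rfl⟩; exact h x
  have := closure_minimal hsub hclosed
  rw [(denseRange_adjoint hJ).closure_range] at this
  exact this (Set.mem_univ z)

lemma psi_injective (hJ : Function.Injective J) :
    Function.Injective (fun P : K →L[ℂ] K => J.comp (P.comp (ContinuousLinearMap.adjoint J))) := by
  intro P Q h
  ext z
  have hpt : ∀ x : H, P (ContinuousLinearMap.adjoint J x) = Q (ContinuousLinearMap.adjoint J x) := by
    intro x
    have h' : J.comp (P.comp (ContinuousLinearMap.adjoint J)) =
        J.comp (Q.comp (ContinuousLinearMap.adjoint J)) := h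
    exact hJ (by simpa using DFunLike.congr_fun h' x)
  have hclosed : IsClosed {w : K | P w = Q w} :=
    isClosed_eq P.continuous Q.continuous
  have hsub : Set.range (ContinuousLinearMap.adjoint J) ⊆ {w : K | P w = Q w} := by
    rintro _ ⟨x, rfl⟩; exact hpt x
  have := closure_minimal hsub hclosed
  rw [(denseRange_adjoint hJ).closure_range] at this
  exact this (Set.mem_univ z)

lemma psi_nonneg_iff (hJ : Function.Injective J) (D : K →L[ℂ] K) :
    0 ≤ J.comp (D.comp (ContinuousLinearMap.adjoint J)) ↔ 0 ≤ D := by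
  constructor
  · intro h
    apply nonneg_of_inner_adjoint hJ
    intro x
    have := (isPosOp_iff_nonneg _).mpr h x
    rwa [comp_apply, comp_apply, ← adjoint_inner_right] at this
  · intro h
    rw [← isPosOp_iff_nonneg]
    intro x
    have := (isPosOp_iff_nonneg D).mpr h (ContinuousLinearMap.adjoint J x)
    rw [comp_apply, comp_apply, ← adjoint_inner_right]
    exact this

lemma psi_le_iff (hJ : Function.Injective J) (P Q : K →L[ℂ] K) :
    J.comp (P.comp (ContinuousLinearMap.adjoint J)) ≤ J.comp (Q.comp (ContinuousLinearMap.adjoint J))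
      ↔ P ≤ Q := by
  rw [← sub_nonneg]
  have hd : J.comp (Q.comp (ContinuousLinearMap.adjoint J)) -
      J.comp (P.comp (ContinuousLinearMap.adjoint J)) =
      J.comp ((Q - P).comp (ContinuousLinearMap.adjoint J)) := by
    ext x; simp
  rw [hd, psi_nonneg_iff hJ, sub_nonneg]


lemma exists_T (hJ : Function.Injective J) {C : H →L[ℂ] H} (h0 : 0 ≤ C)
    (hC : C ≤ J.comp (ContinuousLinearMap.adjoint J)) :
    ∃ T : K →L[ℂ] K, 0 ≤ T ∧ T ≤ 1 ∧
      J.comp (T.comp (ContinuousLinearMap.adjoint J)) = C := by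
  classical
  set J' : H →L[ℂ] K := ContinuousLinearMap.adjoint J with hJ'def
  set R : H →L[ℂ] H := CFC.sqrt C with hRdef
  have hR0 : 0 ≤ R := CFC.sqrt_nonneg _
  have hRR : R * R = C := CFC.sqrt_mul_sqrt_self C h0
  have hRsa : ContinuousLinearMap.adjoint R = R := isSelfAdjoint_iff'.mp hR0.isSelfAdjoint
  -- norm bound
  have hbd : ∀ x : H, ‖R x‖ ≤ ‖J' x‖ := by
    intro x
    have h1 : (⟪C x, x⟫ : ℂ).re = ‖R x‖ ^ 2 := by
      have : (⟪C x, x⟫ : ℂ) = ⟪R x, R x⟫ := by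
        conv_lhs => rw [← hRR]
        rw [mul_apply_eq_comp, ← hRsa, adjoint_inner_left, hRsa]
      rw [this, ← @inner_self_eq_norm_sq ℂ]
      rfl
    have h2 : (⟪(J.comp J') x, x⟫ : ℂ).re = ‖J' x‖ ^ 2 := by
      have : (⟪(J.comp J') x, x⟫ : ℂ) = ⟪J' x, J' x⟫ := by
        rw [comp_apply, ← adjoint_inner_right]
      rw [this, ← @inner_self_eq_norm_sq ℂ]
      rfl
    have h3 := ((isPosOp_iff_nonneg _).mpr ((sub_nonneg).mpr hC)) x
    have h4 : (⟪C x, x⟫ : ℂ).re ≤ (⟪(J.comp J') x, x⟫ : ℂ).re := by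
      have h5 := (Complex.le_def.mp h3).1
      simp only [sub_apply, inner_sub_left, Complex.sub_re, Complex.zero_re] at h5
      linarith
    rw [h1, h2] at h4
    have := norm_nonneg (R x); have := norm_nonneg (J' x)
    nlinarith
  have hwd : ∀ u v : H, J' u = J' v → R u = R v := by
    intro u v huv
    have : ‖R u - R v‖ ≤ ‖J' u - J' v‖ := by
      have := hbd (u - v); simpa using this
    rw [huv, sub_self, norm_zero] at this
    have := le_antisymm this (norm_nonneg _)
    rwa [norm_eq_zero, sub_eq_zero] at this
  set L : Submodule ℂ K := LinearMap.range (J' : H →ₗ[ℂ] K) with hLdef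
  have hmem : ∀ z : L, ∃ x : H, J' x = (z : K) := fun z => LinearMap.mem_range.mp z.2
  choose σ hσ using hmem
  have hg0wd : ∀ (z : L) (x : H), J' x = (z : K) → R (σ z) = R x :=
    fun z x hx => hwd _ _ (by rw [hσ z, hx])
  let g₀ : L →ₗ[ℂ] H :=
    { toFun := fun z => R (σ z)
      map_add' := by
        intro z w
        have h1 : J' (σ z + σ w) = ((z + w : L) : K) := by
          simp [map_add, hσ]
        show R (σ (z + w)) = R (σ z) + R (σ w)
        rw [hg0wd (z + w) _ h1, map_add]
      map_smul' := by
        intro c z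
        have h1 : J' (c • σ z) = ((c • z : L) : K) := by
          simp [map_smul, hσ]
        show R (σ (c • z)) = c • R (σ z)
        rw [hg0wd (c • z) _ h1, map_smul] }
  have hg0bd : ∀ z : L, ‖g₀ z‖ ≤ 1 * ‖z‖ := by
    intro z
    have : ‖R (σ z)‖ ≤ ‖J' (σ z)‖ := hbd (σ z)
    rw [hσ z] at this
    simpa [g₀] using this
  let g : L →L[ℂ] H := g₀.mkContinuous 1 hg0bd
  have hgbd : ‖g‖ ≤ 1 := g₀.mkContinuous_norm_le zero_le_one hg0bd
  let e : L →L[ℂ] K := L.subtypeL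
  have h_e : ∀ z : L, ‖z‖ ≤ (1 : ℝ≥0) * ‖e z‖ := by
    intro z
    simp only [NNReal.coe_one, one_mul]
    exact le_of_eq rfl
  have h_dense : DenseRange e := by
    have h1 : Dense (Set.range (ContinuousLinearMap.adjoint J)) := by
      intro z; exact denseRange_adjoint hJ z
    have h2 : Set.range e = (L : Set K) := Subtype.range_coe
    have h3 : (L : Set K) = Set.range (ContinuousLinearMap.adjoint J) := by
      rw [hLdef, hJ'def]
      exact LinearMap.coe_range _
    rw [DenseRange, h2, h3]
    exact h1
  have h_ui := (ContinuousLinearMap.isUniformEmbedding_of_bound e h_e).isUniformInducing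
  set S : K →L[ℂ] H := g.extend e with hSdef
  have hSe : ∀ x : H, S (J' x) = R x := by
    intro x
    have hx : J' x ∈ L := LinearMap.mem_range_self _ x
    have h1 : S (e ⟨J' x, hx⟩) = g ⟨J' x, hx⟩ := ContinuousLinearMap.extend_eq g h_dense h_ui _
    have h2 : e (⟨J' x, hx⟩ : L) = J' x := rfl
    rw [h2] at h1
    rw [h1]
    show R (σ ⟨J' x, hx⟩) = R x
    exact hg0wd _ _ rfl
  have hSnorm : ‖S‖ ≤ 1 := by
    have h1 := ContinuousLinearMap.opNorm_extend_le g h_dense h_e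
    calc ‖S‖ ≤ (1 : ℝ≥0) * ‖g‖ := h1
    _ ≤ 1 := by simpa using hgbd
  refine ⟨(ContinuousLinearMap.adjoint S).comp S, ?_, ?_, ?_⟩
  · rw [← isPosOp_iff_nonneg]
    intro z
    rw [comp_apply, adjoint_inner_left, @inner_self_eq_norm_sq_to_K ℂ, ← RCLike.ofReal_pow]
    exact Complex.zero_le_real.mpr (sq_nonneg ‖S z‖)
  · rw [← sub_nonneg, ← isPosOp_iff_nonneg]
    intro z
    have h1 : (⟪((1 : K →L[ℂ] K) - (ContinuousLinearMap.adjoint S).comp S) z, z⟫ : ℂ)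
        = ((‖z‖ ^ 2 - ‖S z‖ ^ 2 : ℝ) : ℂ) := by
      rw [sub_apply, inner_sub_left, one_apply_eq_self, comp_apply, adjoint_inner_left]
      rw [@inner_self_eq_norm_sq_to_K ℂ, @inner_self_eq_norm_sq_to_K ℂ]
      push_cast
      try ring
      try rfl
    rw [h1]
    have h2 : ‖S z‖ ≤ ‖z‖ := by
      calc ‖S z‖ ≤ ‖S‖ * ‖z‖ := S.le_opNorm z
      _ ≤ 1 * ‖z‖ := by
        apply mul_le_mul_of_nonneg_right hSnorm (norm_nonneg z)
      _ = ‖z‖ := one_mul _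
    have h3 : (0 : ℝ) ≤ ‖z‖ ^ 2 - ‖S z‖ ^ 2 := by
      nlinarith [norm_nonneg (S z)]
    exact_mod_cast Complex.zero_le_real.mpr h3
  · ext x
    apply ext_inner_right ℂ
    intro y
    rw [comp_apply, comp_apply]
    show (⟪J ((ContinuousLinearMap.adjoint S) (S (J' x))), y⟫ : ℂ) = ⟪C x, y⟫
    rw [hSe x, ← adjoint_inner_right, adjoint_inner_left]
    rw [hSe y]
    rw [← hRsa, adjoint_inner_right, hRsa, ← mul_apply_eq_comp, hRR]


-- helper: if u•A + v•C = P, P w = 0, then A w = 0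
lemma segment_zero {A C P : H →L[ℂ] H} (hA0 : 0 ≤ A) (hC0 : 0 ≤ C)
    {u v : ℝ} (hu : 0 < u) (hv : 0 < v) (hsum : u • A + v • C = P)
    {w : H} (hw : P w = 0) : A w = 0 := by
  have hAw : (⟪A w, w⟫ : ℂ).re = 0 := by
    have h1 : (⟪P w, w⟫ : ℂ) = 0 := by rw [hw, inner_zero_left]
    have h2 : u * (⟪A w, w⟫ : ℂ).re + v * (⟪C w, w⟫ : ℂ).re = 0 := by
      have h1' := congrArg (RCLike.re (K := ℂ)) h1
      rw [← hsum] at h1'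
      simp only [add_apply, smul_apply, inner_add_left,
        RCLike.real_smul_eq_coe_smul (K := ℂ), inner_smul_left, RCLike.conj_ofReal,
        map_add, RCLike.re_ofReal_mul, map_zero] at h1'
      simp only [RCLike.re_to_complex] at h1'
      exact h1'
    have ha := ((isPosOp_iff_nonneg A).mpr hA0) w
    have hc := ((isPosOp_iff_nonneg C).mpr hC0) w
    have ha' : 0 ≤ (⟪A w, w⟫ : ℂ).re := by simpa using (Complex.le_def.mp ha).1
    have hc' : 0 ≤ (⟪C w, w⟫ : ℂ).re := by simpa using (Complex.le_def.mp hc).1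
    nlinarith
  exact apply_eq_zero_of_re_inner_zero hA0 hAw

lemma segment_eq_proj {A C P : H →L[ℂ] H}
    (hsa : ContinuousLinearMap.adjoint P = P) (hidem : P.comp P = P)
    (hA : A ∈ {T : H →L[ℂ] H | 0 ≤ T ∧ T ≤ 1}) (hC : C ∈ {T : H →L[ℂ] H | 0 ≤ T ∧ T ≤ 1})
    {u v : ℝ} (hu : 0 < u) (hv : 0 < v) (huv : u + v = 1)
    (hsum : u • A + v • C = P) : A = P := by
  have hPP : ∀ x : H, P (P x) = P x := by
    intro x
    have := DFunLike.congr_fun hidem x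
    simpa only [comp_apply] using this
  have key1 : ∀ w : H, P w = 0 → A w = 0 :=
    fun w hw => segment_zero hA.1 hC.1 hu hv hsum hw
  have hone : u • (1 : H →L[ℂ] H) + v • (1 : H →L[ℂ] H) = 1 := by
    rw [← add_smul, huv, one_smul]
  have hsum' : u • (1 - A) + v • (1 - C) = 1 - P := by
    calc u • ((1 : H →L[ℂ] H) - A) + v • (1 - C)
        = (u • (1 : H →L[ℂ] H) + v • 1) - (u • A + v • C) := by module
      _ = 1 - P := by rw [hone, hsum]
  have key2 : ∀ w : H, P w = w → A w = w := by
    intro w hw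
    have h1 : ((1 : H →L[ℂ] H) - P) w = 0 := by simp [hw]
    have h2 := segment_zero (sub_nonneg.mpr hA.2) (sub_nonneg.mpr hC.2) hu hv hsum' h1
    have h3 : w - A w = 0 := by simpa using h2
    exact (sub_eq_zero.mp h3).symm
  ext x
  have hx1 : A (P x) = P x := key2 (P x) (hPP x)
  have hx2 : A (x - P x) = 0 := key1 (x - P x) (by simp [hPP])
  have : A x = A (P x) + A (x - P x) := by rw [← map_add]; congr 1; abel
  rw [this, hx1, hx2, add_zero]

lemma proj_mem_extremePoints {P : H →L[ℂ] H}
    (hsa : ContinuousLinearMap.adjoint P = P) (hidem : P.comp P = P) :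
    P ∈ Set.extremePoints ℝ {T : H →L[ℂ] H | 0 ≤ T ∧ T ≤ 1} := by
  have hP0 : 0 ≤ P := by
    have h1 : P = star P * P := by
      rw [ContinuousLinearMap.star_eq_adjoint, hsa, ContinuousLinearMap.mul_def, hidem]
    rw [h1]; exact star_mul_self_nonneg P
  have hsa1 : ContinuousLinearMap.adjoint ((1 : H →L[ℂ] H) - P) = 1 - P := by
    have := (IsSelfAdjoint.one (R := H →L[ℂ] H)).sub (isSelfAdjoint_iff'.mpr hsa)
    exact isSelfAdjoint_iff'.mp this
  have hPPx : ∀ x : H, P (P x) = P x := by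
    intro x
    have := DFunLike.congr_fun hidem x
    simpa only [comp_apply] using this
  have hidem1 : ((1 : H →L[ℂ] H) - P).comp ((1 : H →L[ℂ] H) - P) = 1 - P := by
    ext x
    simp only [comp_apply, sub_apply, one_apply_eq_self, map_sub]
    rw [hPPx x]
    abel
  have hP1 : P ≤ 1 := by
    rw [← sub_nonneg]
    have h1 : (1 : H →L[ℂ] H) - P = star (1 - P) * (1 - P) := by
      rw [ContinuousLinearMap.star_eq_adjoint, hsa1, ContinuousLinearMap.mul_def, hidem1]
    rw [h1]; exact star_mul_self_nonneg _
  rw [mem_extremePoints]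
  refine ⟨⟨hP0, hP1⟩, ?_⟩
  rintro A hA C hC ⟨u, v, hu, hv, huv, hsum⟩
  constructor
  · exact segment_eq_proj hsa hidem hA hC hu hv huv hsum
  · refine segment_eq_proj hsa hidem hC hA hv hu (by linarith) ?_
    rw [← hsum]; abel

lemma extremePoint_is_proj {T : H →L[ℂ] H}
    (hT : T ∈ Set.extremePoints ℝ {T : H →L[ℂ] H | 0 ≤ T ∧ T ≤ 1}) :
    ContinuousLinearMap.adjoint T = T ∧ T.comp T = T := by
  rw [mem_extremePoints] at hT
  obtain ⟨⟨hT0, hT1⟩, hext⟩ := hT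
  have hsa : IsSelfAdjoint T := hT0.isSelfAdjoint
  refine ⟨isSelfAdjoint_iff'.mp hsa, ?_⟩
  set R : H →L[ℂ] H := CFC.sqrt T with hRdef
  have hR0 : 0 ≤ R := CFC.sqrt_nonneg _
  have hRR : R * R = T := CFC.sqrt_mul_sqrt_self T hT0
  have hRstar : star R = R := hR0.isSelfAdjoint.star_eq
  have hcomm : T * R = R * T := by rw [← hRR, mul_assoc]
  set G : H →L[ℂ] H := T - T * T with hGdef
  have hG0 : 0 ≤ G := by
    have h1 : 0 ≤ (1 : H →L[ℂ] H) - T := sub_nonneg.mpr hT1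
    have h2 := star_left_conjugate_nonneg h1 R
    rw [hRstar] at h2
    have h3 : R * ((1 : H →L[ℂ] H) - T) * R = G := by
      rw [hGdef, mul_sub, sub_mul, mul_one, hRR, ← hcomm, mul_assoc, hRR]
    rwa [h3] at h2
  have hTT0 : 0 ≤ T * T := by
    have := star_mul_self_nonneg T
    rwa [hsa.star_eq] at this
  have hTT1 : T * T ≤ 1 := by
    have h1 := star_left_conjugate_le_conjugate hT1 R
    rw [hRstar, mul_one, hRR] at h1
    have h2 : R * T * R = T * T := by
      rw [← hcomm, mul_assoc, hRR]
    rw [h2] at h1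
    exact le_trans h1 hT1
  have hTG1 : T + G ≤ 1 := by
    rw [← sub_nonneg]
    have h1 : (1 : H →L[ℂ] H) - (T + G) = star (1 - T) * (1 - T) := by
      rw [star_sub, star_one, hsa.star_eq, hGdef]
      noncomm_ring
    rw [h1]
    exact star_mul_self_nonneg _
  have hmem1 : T + G ∈ {T : H →L[ℂ] H | 0 ≤ T ∧ T ≤ 1} := ⟨add_nonneg hT0 hG0, hTG1⟩
  have hmem2 : T - G ∈ {T : H →L[ℂ] H | 0 ≤ T ∧ T ≤ 1} := by
    have h1 : T - G = T * T := by rw [hGdef]; abel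
    rw [h1]; exact ⟨hTT0, hTT1⟩
  have hseg : T ∈ openSegment ℝ (T + G) (T - G) := by
    exact ⟨1/2, 1/2, by norm_num, by norm_num, by norm_num, by module⟩
  have := hext (T + G) hmem1 (T - G) hmem2 hseg
  have hG : G = 0 := by
    have h1 := this.1
    have : T + G - T = 0 := by rw [h1]; abel
    simpa using this
  have hTT : T * T = T := by
    have : T - T * T = 0 := by rw [← hGdef, hG]
    have h2 := sub_eq_zero.mp this
    exact h2.symm
  rw [← ContinuousLinearMap.mul_def, hTT]


lemma psi_affine (u v : ℝ) (P Q : K →L[ℂ] K) :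
    J.comp ((u • P + v • Q).comp (ContinuousLinearMap.adjoint J)) =
      u • J.comp (P.comp (ContinuousLinearMap.adjoint J)) +
      v • J.comp (Q.comp (ContinuousLinearMap.adjoint J)) := by
  ext x
  simp [map_add, ContinuousLinearMap.map_smul_of_tower]

lemma psi_one :
    J.comp ((1 : K →L[ℂ] K).comp (ContinuousLinearMap.adjoint J)) =
      J.comp (ContinuousLinearMap.adjoint J) := by
  ext x; simp

lemma psi_mapsTo (hJ : Function.Injective J) {T : K →L[ℂ] K} (hT0 : 0 ≤ T) (hT1 : T ≤ 1) :
    0 ≤ J.comp (T.comp (ContinuousLinearMap.adjoint J)) ∧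
      J.comp (T.comp (ContinuousLinearMap.adjoint J)) ≤ J.comp (ContinuousLinearMap.adjoint J) := by
  refine ⟨(psi_nonneg_iff hJ T).mpr hT0, ?_⟩
  have := (psi_le_iff hJ T 1).mpr hT1
  rwa [psi_one] at this

lemma psi_extreme_iff (hJ : Function.Injective J) (T : K →L[ℂ] K) :
    J.comp (T.comp (ContinuousLinearMap.adjoint J)) ∈
        Set.extremePoints ℝ {C : H →L[ℂ] H | 0 ≤ C ∧ C ≤ J.comp (ContinuousLinearMap.adjoint J)}
      ↔ T ∈ Set.extremePoints ℝ {T : K →L[ℂ] K | 0 ≤ T ∧ T ≤ 1} := by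
  constructor
  · intro hC
    rw [mem_extremePoints] at hC ⊢
    obtain ⟨hCmem, hCex⟩ := hC
    have hTmem : T ∈ {T : K →L[ℂ] K | 0 ≤ T ∧ T ≤ 1} := by
      constructor
      · exact (psi_nonneg_iff hJ T).mp hCmem.1
      · rw [← psi_le_iff hJ T 1, psi_one]
        exact hCmem.2
    refine ⟨hTmem, ?_⟩
    rintro A hA C hC' ⟨u, v, hu, hv, huv, hsum⟩
    have h1 : u • J.comp (A.comp (ContinuousLinearMap.adjoint J)) +
        v • J.comp (C.comp (ContinuousLinearMap.adjoint J)) =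
        J.comp (T.comp (ContinuousLinearMap.adjoint J)) := by
      rw [← psi_affine, hsum]
    have h2 := hCex _ ⟨(psi_nonneg_iff hJ A).mpr hA.1, ((psi_mapsTo hJ hA.1 hA.2).2)⟩
      _ ⟨(psi_nonneg_iff hJ C).mpr hC'.1, ((psi_mapsTo hJ hC'.1 hC'.2).2)⟩
      ⟨u, v, hu, hv, huv, h1⟩
    constructor
    · exact psi_injective hJ h2.1
    · exact psi_injective hJ h2.2
  · intro hT
    rw [mem_extremePoints] at hT ⊢
    obtain ⟨hTmem, hTex⟩ := hT
    refine ⟨⟨(psi_nonneg_iff hJ T).mpr hTmem.1, (psi_mapsTo hJ hTmem.1 hTmem.2).2⟩, ?_⟩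
    rintro C1 hC1 C2 hC2 ⟨u, v, hu, hv, huv, hsum⟩
    obtain ⟨T1, hT10, hT11, hT1eq⟩ := exists_T hJ hC1.1 hC1.2
    obtain ⟨T2, hT20, hT21, hT2eq⟩ := exists_T hJ hC2.1 hC2.2
    have h1 : J.comp ((u • T1 + v • T2).comp (ContinuousLinearMap.adjoint J)) =
        J.comp (T.comp (ContinuousLinearMap.adjoint J)) := by
      rw [psi_affine, hT1eq, hT2eq, hsum]
    have h2 : u • T1 + v • T2 = T := psi_injective hJ h1
    have h3 := hTex T1 ⟨hT10, hT11⟩ T2 ⟨hT20, hT21⟩ ⟨u, v, hu, hv, huv, h2⟩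
    constructor
    · rw [← hT1eq, h3.1]
    · rw [← hT2eq, h3.2]

end ExtremeAux

open ExtremeAux in
theorem projections_biject_with_extreme_points
    {H : Type*} [NormedAddCommGroup H] [InnerProductSpace ℂ H] [CompleteSpace H]
    {K : Type*} [NormedAddCommGroup K] [InnerProductSpace ℂ K] [CompleteSpace K]
    (B : H →L[ℂ] H) (hB : IsPosOp B)
    (J : K →L[ℂ] H) (hJ : Function.Injective J)
    (hJB : J.comp (ContinuousLinearMap.adjoint J) = B) :
    Set.BijOn (fun P : K →L[ℂ] K => J.comp (P.comp (ContinuousLinearMap.adjoint J)))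
      {P : K →L[ℂ] K | ContinuousLinearMap.adjoint P = P ∧ P.comp P = P}
      (Set.extremePoints ℝ {C : H →L[ℂ] H | IsPosOp C ∧ OpLe C B}) ∧
    ∀ P Q : K →L[ℂ] K,
      (ContinuousLinearMap.adjoint P = P ∧ P.comp P = P) →
      (ContinuousLinearMap.adjoint Q = Q ∧ Q.comp Q = Q) →
      (OpLe (J.comp (P.comp (ContinuousLinearMap.adjoint J)))
          (J.comp (Q.comp (ContinuousLinearMap.adjoint J))) ↔ OpLe P Q) := by

  subst hJB
  have hset : {C : H →L[ℂ] H | IsPosOp C ∧ OpLe C (J.comp (ContinuousLinearMap.adjoint J))} =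
      {C : H →L[ℂ] H | 0 ≤ C ∧ C ≤ J.comp (ContinuousLinearMap.adjoint J)} :=
    Set.ext fun C => and_congr (isPosOp_iff_nonneg C) (opLe_iff C _)
  rw [hset]
  constructor
  · refine ⟨?_, ?_, ?_⟩
    · intro P hP
      exact (psi_extreme_iff hJ P).mpr (proj_mem_extremePoints hP.1 hP.2)
    · intro P _ Q _ h
      exact psi_injective hJ h
    · intro C hC
      have hCmem := hC.1
      obtain ⟨T, hT0, hT1, hTeq⟩ := exists_T hJ hCmem.1 hCmem.2
      have hText : T ∈ Set.extremePoints ℝ {T : K →L[ℂ] K | 0 ≤ T ∧ T ≤ 1} := by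
        rw [← psi_extreme_iff hJ, hTeq]
        exact hC
      exact ⟨T, extremePoint_is_proj hText, hTeq⟩
  · intro P Q _ _
    rw [opLe_iff, opLe_iff]
    exact psi_le_iff hJ P Q
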